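/- Let H > 0 and 0 < a₁ ≤ a₂ ≤ … ≤ a_{m−1} be positive reals with a₁ + ⋯ + a_{m−1} ≤ H. Define angles φ'_k for k = 1, …, m−1 by tan(φ'₁ + ⋯ + φ'_k) = (a_{m−1} + a_{m−2} + ⋯ + a_{m−k})/H with each partial sum of the φ'_k in (0, π/2). Then φ'_k > φ'_{k+1} for all 1 ≤ k ≤ m−2. -/

import Mathlib

open Real Finset

/-- The increment function of arctan is strictly decreasing on nonnegative reals. -/
lemma arctan_increment_strictAnti (b : ℝ) (hb : 0 < b) {x y : ℝ} (hx : 0 ≤ x) (hxy : x < y) :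
    Real.arctan (y + b) - Real.arctan y < Real.arctan (x + b) - Real.arctan x := by
  have key : StrictAntiOn (fun t : ℝ => Real.arctan (t + b) - Real.arctan t) (Set.Ici 0) := by
    apply strictAntiOn_of_deriv_neg (convex_Ici 0)
    · exact ((Real.continuous_arctan.comp (continuous_id.add continuous_const)).sub
        Real.continuous_arctan).continuousOn
    · intro t ht
      rw [interior_Ici] at ht
      have h1 : HasDerivAt (fun t : ℝ => Real.arctan (t + b))
          (1 / (1 + (t + b) ^ 2) * 1) t :=
        by have := (Real.hasDerivAt_arctan (t + b)).comp t ((hasDerivAt_id' t).add_const b); exact this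
      have h2 : HasDerivAt (fun t : ℝ => Real.arctan (t + b) - Real.arctan t)
          (1 / (1 + (t + b) ^ 2) * 1 - 1 / (1 + t ^ 2)) t :=
        h1.sub (Real.hasDerivAt_arctan t)
      rw [h2.deriv]
      have ht0 : (0 : ℝ) < t := ht
      have hlt : 1 + t ^ 2 < 1 + (t + b) ^ 2 := by nlinarith
      have hp : (0 : ℝ) < 1 + t ^ 2 := by positivity
      have := one_div_lt_one_div_of_lt hp hlt
      linarith
  exact key hx (le_of_lt (lt_of_le_of_lt hx hxy)) hxy

/-- Concavity-type inequality for arctan increments. -/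
lemma arctan_diff_lt {x y z : ℝ} (hx : 0 ≤ x) (hxy : x < y) (hyz : y < z)
    (hd : z - y ≤ y - x) :
    Real.arctan z - Real.arctan y < Real.arctan y - Real.arctan x := by
  have hb : 0 < z - y := by linarith
  have h1 : Real.arctan (y + (z - y)) - Real.arctan y
      < Real.arctan (x + (z - y)) - Real.arctan x :=
    arctan_increment_strictAnti (z - y) hb hx hxy
  have h2 : Real.arctan (x + (z - y)) ≤ Real.arctan y := by
    apply Real.arctan_strictMono.monotone
    linarith
  have hyzeq : y + (z - y) = z := by ring
  rw [hyzeq] at h1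
  linarith

/-- Let `H > 0` and `0 < a 1 ≤ a 2 ≤ ⋯ ≤ a (m-1)` with total sum at most `H`.  Define the
angles `φ' k` (for `k = 1, …, m-1`) by `tan (φ' 1 + ⋯ + φ' k) = (a (m-1) + ⋯ + a (m-k)) / H`,
each partial sum lying in `(0, π/2)`.  Then `φ' k > φ' (k+1)` for all `1 ≤ k ≤ m-2`. -/
theorem phi_strict_anti (m : ℕ) (hm : 2 ≤ m) (H : ℝ) (hH : 0 < H)
    (a φ' : ℕ → ℝ)
    (hapos : ∀ i : ℕ, 1 ≤ i → i ≤ m - 1 → 0 < a i)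
    (hamono : ∀ i : ℕ, 1 ≤ i → i + 1 ≤ m - 1 → a i ≤ a (i + 1))
    (hasum : ∑ i ∈ Finset.Icc 1 (m - 1), a i ≤ H)
    (hrange : ∀ k : ℕ, 1 ≤ k → k ≤ m - 1 →
      (∑ j ∈ Finset.Icc 1 k, φ' j) ∈ Set.Ioo 0 (π / 2))
    (htan : ∀ k : ℕ, 1 ≤ k → k ≤ m - 1 →
      Real.tan (∑ j ∈ Finset.Icc 1 k, φ' j) = (∑ j ∈ Finset.Icc (m - k) (m - 1), a j) / H) :
    ∀ k : ℕ, 1 ≤ k → k ≤ m - 2 → φ' (k + 1) < φ' k := by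
  -- abbreviations
  set T : ℕ → ℝ := fun j => ∑ i ∈ Finset.Icc 1 j, φ' i with hT
  set B : ℕ → ℝ := fun j => ∑ i ∈ Finset.Icc (m - j) (m - 1), a i with hB
  have hS : ∀ j : ℕ, j ≤ m - 1 → T j = Real.arctan (B j / H) := by
    intro j hj
    rcases Nat.eq_zero_or_pos j with hj0 | hj1
    · subst hj0
      have h1 : T 0 = 0 := by simp [hT]
      have h2 : B 0 = 0 := by
        have h : Finset.Icc m (m - 1) = ∅ := Finset.Icc_eq_empty (by omega)
        simp [hB, h]
      rw [h1, h2]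
      simp
    · have hr := hrange j hj1 hj
      have ht := htan j hj1 hj
      have := Real.arctan_tan (x := T j) (by linarith [hr.1, Real.pi_pos]) hr.2
      rw [← this, ht]
  -- Sum decompositions
  intro k hk1 hk2
  have hkm : k ≤ m - 1 := by omega
  have hk1m : k + 1 ≤ m - 1 := by omega
  -- φ' decomposition
  have hphi1 : φ' (k + 1) = T (k + 1) - T k := by
    have := Finset.sum_Icc_succ_top (by omega : 1 ≤ k + 1) φ'
    simp only [hT]
    rw [this]; ring
  have hphi2 : φ' k = T k - T (k - 1) := by
    have h := Finset.sum_Icc_succ_top (by omega : 1 ≤ (k - 1) + 1) φ'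
    have hk : k - 1 + 1 = k := by omega
    rw [hk] at h
    simp only [hT]
    rw [h]; ring
  -- B decomposition: for 1 ≤ j ≤ m-1, B j = a (m - j) + B (j - 1)
  have hBdec : ∀ j : ℕ, 1 ≤ j → j ≤ m - 1 → B j = a (m - j) + B (j - 1) := by
    intro j hj1 hj2
    have hle : m - j ≤ m - 1 := by omega
    have hIcc : Finset.Icc (m - j) (m - 1) =
        (Finset.Ioc (m - j) (m - 1)).cons (m - j) Finset.left_notMem_Ioc :=
      Finset.Icc_eq_cons_Ioc hle
    have hIoc : Finset.Ioc (m - j) (m - 1) = Finset.Icc (m - j + 1) (m - 1) := by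
      rw [Finset.Icc_add_one_left_eq_Ioc]
    have hidx : m - j + 1 = m - (j - 1) := by omega
    simp only [hB]
    rw [hIcc, Finset.sum_cons, hIoc, hidx]
  -- positivity of B (j) for j ≤ m - 1
  have hBnonneg : ∀ j : ℕ, j ≤ m - 1 → 0 ≤ B j := by
    intro j hj
    apply Finset.sum_nonneg
    intro i hi
    simp only [Finset.mem_Icc] at hi
    have h1 : 1 ≤ i := by omega
    exact le_of_lt (hapos i h1 hi.2)
  -- key index facts
  have hmk1 : 1 ≤ m - k := by omega
  have hmk2 : m - k ≤ m - 1 := by omega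
  have hmk1' : 1 ≤ m - (k + 1) := by omega
  have hmk2' : m - (k + 1) ≤ m - 1 := by omega
  have haK : 0 < a (m - k) := hapos _ hmk1 hmk2
  have haK' : 0 < a (m - (k + 1)) := hapos _ hmk1' hmk2'
  have hBk : B k = a (m - k) + B (k - 1) := hBdec k hk1 hkm
  have hBk1 : B (k + 1) = a (m - (k + 1)) + B k := by
    have := hBdec (k + 1) (by omega) hk1m
    simpa using this
  have hamono' : a (m - (k + 1)) ≤ a (m - k) := by
    have h := hamono (m - (k + 1)) hmk1' (by omega)
    have : m - (k + 1) + 1 = m - k := by omega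
    rwa [this] at h
  -- main inequality via arctan concavity
  have hx : (0 : ℝ) ≤ B (k - 1) / H := div_nonneg (hBnonneg _ (by omega)) hH.le
  have hxy : B (k - 1) / H < B k / H := by
    apply div_lt_div_of_pos_right ?_ hH
    linarith
  have hyz : B k / H < B (k + 1) / H := by
    apply div_lt_div_of_pos_right ?_ hH
    linarith
  have hd : B (k + 1) / H - B k / H ≤ B k / H - B (k - 1) / H := by
    have e1 : B (k + 1) / H - B k / H = a (m - (k + 1)) / H := by
      rw [hBk1]; ring
    have e2 : B k / H - B (k - 1) / H = a (m - k) / H := by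
      rw [hBk]; ring
    rw [e1, e2]
    gcongr
  have key := arctan_diff_lt hx hxy hyz hd
  rw [hphi1, hphi2, hS (k + 1) hk1m, hS k hkm, hS (k - 1) (by omega)]
  exact key
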